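/- arXiv:2009.05133 — 3 statements merged into one kernel-verified Lean document; each statement's English description precedes it below -/
import Mathlib

section
/- (Lemma 1, equivalence of the finite-alphabet problems.) Let H ∈ ℂ^{U×B}, κ > 0, u ∈ {1,…,U}, h_u^r the u-th row of H, and let S ⊆ ℂ^B be any set of nonzero vectors such that h_u^r a ≠ 0 for all a ∈ S (e.g., S a subset of X^B for a finite alphabet X ⊂ ℂ). Define G(a) = min over α ∈ ℂ of ( ‖e_u − α* H a‖₂² + κ |α|² ‖a‖₂² ) and R(a) = ( ‖H a‖₂² + κ ‖a‖₂² ) / |h_u^r a|². Then for all a, a' ∈ S, G(a) ≤ G(a') if and only if R(a) ≤ R(a'); consequently, a ∈ S minimizes G over S if and only if a minimizes R over S. -/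
open Matrix

/-- The per-column Wiener-filter objective evaluated at the structured column `a α*`:
`‖e_u − α* H a‖₂² + κ |α|² ‖a‖₂²`. -/
noncomputable def preObj (U B : ℕ) (H : Matrix (Fin U) (Fin B) ℂ) (κ : ℝ)
    (u : Fin U) (a : Fin B → ℂ) (α : ℂ) : ℝ :=
  (∑ i, ‖(Pi.single u 1 : Fin U → ℂ) i - (starRingEnd ℂ) α * H.mulVec a i‖ ^ 2)
    + κ * ‖α‖ ^ 2 * ∑ j, ‖a j‖ ^ 2

/-- `G(a)`: the minimum over `α ∈ ℂ` of the structured per-column objective. -/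
noncomputable def Gpre (U B : ℕ) (H : Matrix (Fin U) (Fin B) ℂ) (κ : ℝ)
    (u : Fin U) (a : Fin B → ℂ) : ℝ :=
  sInf (Set.range (preObj U B H κ u a))

/-- The ratio objective `R(a) = (‖H a‖₂² + κ ‖a‖₂²) / |h_uʳ a|²` of eq. (12). -/
noncomputable def Rpre (U B : ℕ) (H : Matrix (Fin U) (Fin B) ℂ) (κ : ℝ)
    (u : Fin U) (a : Fin B → ℂ) : ℝ :=
  ((∑ i, ‖H.mulVec a i‖ ^ 2) + κ * ∑ j, ‖a j‖ ^ 2) / ‖H.mulVec a u‖ ^ 2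

private lemma sq_norm_sub_c (z w : ℂ) :
    ‖z - w‖ ^ 2 = ‖z‖ ^ 2 - 2 * (z * (starRingEnd ℂ) w).re + ‖w‖ ^ 2 := by
  rw [Complex.sq_norm, Complex.sq_norm, Complex.sq_norm]
  simp only [Complex.normSq_apply, Complex.sub_re, Complex.sub_im, Complex.mul_re,
    Complex.conj_re, Complex.conj_im]
  ring

private lemma preObj_eq (U B : ℕ) (H : Matrix (Fin U) (Fin B) ℂ) (κ : ℝ)
    (u : Fin U) (a : Fin B → ℂ) (α : ℂ) :
    preObj U B H κ u a α =
      1 - 2 * (α * (starRingEnd ℂ) (H.mulVec a u)).re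
        + ‖α‖ ^ 2 * ((∑ i, ‖H.mulVec a i‖ ^ 2) + κ * ∑ j, ‖a j‖ ^ 2) := by
  unfold preObj
  have h1 : (∑ i, ‖(Pi.single u 1 : Fin U → ℂ) i - (starRingEnd ℂ) α * H.mulVec a i‖ ^ 2)
      = ∑ i, (‖(Pi.single u 1 : Fin U → ℂ) i‖ ^ 2
        - 2 * ((Pi.single u 1 : Fin U → ℂ) i * (starRingEnd ℂ) ((starRingEnd ℂ) α * H.mulVec a i)).re
        + ‖(starRingEnd ℂ) α * H.mulVec a i‖ ^ 2) :=
    Finset.sum_congr rfl fun i _ => sq_norm_sub_c _ _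
  rw [h1]
  rw [Finset.sum_add_distrib, Finset.sum_sub_distrib]
  have h2 : (∑ i, ‖(Pi.single u 1 : Fin U → ℂ) i‖ ^ 2) = 1 := by
    rw [Finset.sum_eq_single u]
    · simp
    · intro b _ hb; simp [Pi.single_eq_of_ne hb]
    · simp
  have h3 : (∑ i, 2 * ((Pi.single u 1 : Fin U → ℂ) i * (starRingEnd ℂ) ((starRingEnd ℂ) α * H.mulVec a i)).re)
      = 2 * (α * (starRingEnd ℂ) (H.mulVec a u)).re := by
    rw [Finset.sum_eq_single u]
    · simp [mul_comm]
    · intro b _ hb; simp [Pi.single_eq_of_ne hb]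
    · simp
  have h4 : (∑ i, ‖(starRingEnd ℂ) α * H.mulVec a i‖ ^ 2) = ‖α‖ ^ 2 * ∑ i, ‖H.mulVec a i‖ ^ 2 := by
    rw [Finset.mul_sum]
    refine Finset.sum_congr rfl fun i _ => ?_
    rw [norm_mul, mul_pow, Complex.norm_conj]
  rw [h2, h3, h4]
  ring

private lemma re_mul_conj_le (α w : ℂ) : (α * (starRingEnd ℂ) w).re ≤ ‖α‖ * ‖w‖ := by
  calc (α * (starRingEnd ℂ) w).re ≤ ‖α * (starRingEnd ℂ) w‖ := Complex.re_le_norm _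
    _ = ‖α‖ * ‖w‖ := by rw [norm_mul]; simp

private lemma key_sInf (w : ℂ) (D : ℝ) (hD : 0 < D) :
    sInf (Set.range (fun α : ℂ => 1 - 2 * (α * (starRingEnd ℂ) w).re + ‖α‖ ^ 2 * D))
      = 1 - ‖w‖ ^ 2 / D := by
  have bound : ∀ α : ℂ, 1 - ‖w‖ ^ 2 / D ≤ 1 - 2 * (α * (starRingEnd ℂ) w).re + ‖α‖ ^ 2 * D := by
    intro α
    have h1 := re_mul_conj_le α w
    have h2 := sq_nonneg (D * ‖α‖ - ‖w‖)
    have h3 : ‖w‖ ^ 2 / D * D = ‖w‖ ^ 2 := div_mul_cancel₀ _ hD.ne'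
    nlinarith [norm_nonneg α, norm_nonneg w]
  apply le_antisymm
  · apply csInf_le
    · exact ⟨1 - ‖w‖ ^ 2 / D, by rintro x ⟨α, rfl⟩; exact bound α⟩
    · refine ⟨(w / (D : ℂ)), ?_⟩
      have h1 : ((w / (D : ℂ)) * (starRingEnd ℂ) w).re = ‖w‖ ^ 2 / D := by
        rw [div_mul_eq_mul_div, Complex.mul_conj', ← Complex.ofReal_pow,
          ← Complex.ofReal_div, Complex.ofReal_re]
      have h2 : ‖w / (D : ℂ)‖ ^ 2 = ‖w‖ ^ 2 / D ^ 2 := by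
        rw [norm_div, Complex.norm_real, Real.norm_eq_abs, abs_of_pos hD, div_pow]
      simp only [h1, h2]
      field_simp
      ring
  · exact le_csInf (Set.range_nonempty _) (by rintro x ⟨α, rfl⟩; exact bound α)

private lemma Gpre_eq (U B : ℕ) (H : Matrix (Fin U) (Fin B) ℂ) (κ : ℝ) (hκ : 0 < κ)
    (u : Fin U) (a : Fin B → ℂ) (ha : a ≠ 0) :
    Gpre U B H κ u a = 1 - ‖H.mulVec a u‖ ^ 2 /
      ((∑ i, ‖H.mulVec a i‖ ^ 2) + κ * ∑ j, ‖a j‖ ^ 2) := by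
  have hD : 0 < (∑ i, ‖H.mulVec a i‖ ^ 2) + κ * ∑ j, ‖a j‖ ^ 2 := by
    have hs : 0 < ∑ j, ‖a j‖ ^ 2 := by
      obtain ⟨j, hj⟩ := Function.ne_iff.mp ha
      have hj' : a j ≠ 0 := by simpa using hj
      have : (0:ℝ) < ‖a j‖ ^ 2 := pow_pos (norm_pos_iff.mpr hj') 2
      exact lt_of_lt_of_le this (Finset.single_le_sum (f := fun j => ‖a j‖ ^ 2)
        (fun i _ => by positivity) (Finset.mem_univ j))
    have h1 : (0:ℝ) ≤ ∑ i, ‖H.mulVec a i‖ ^ 2 :=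
      Finset.sum_nonneg fun i _ => by positivity
    nlinarith
  have hfun : preObj U B H κ u a = fun α : ℂ =>
      1 - 2 * (α * (starRingEnd ℂ) (H.mulVec a u)).re
        + ‖α‖ ^ 2 * ((∑ i, ‖H.mulVec a i‖ ^ 2) + κ * ∑ j, ‖a j‖ ^ 2) :=
    funext fun α => preObj_eq U B H κ u a α
  rw [Gpre, hfun, key_sInf _ _ hD]

/-- Lemma 1, equivalence of the finite-alphabet problems: on any set `S`
of nonzero vectors with `h_uʳ a ≠ 0`, `G(a) ≤ G(a') ↔ R(a) ≤ R(a')`; consequently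
`a` minimizes `G` over `S` iff it minimizes `R` over `S`. -/
theorem preFAWP_lemma1_equivalence (U B : ℕ) (H : Matrix (Fin U) (Fin B) ℂ)
    (κ : ℝ) (hκ : 0 < κ) (u : Fin U) (S : Set (Fin B → ℂ))
    (hS0 : ∀ a ∈ S, a ≠ 0) (hSh : ∀ a ∈ S, H.mulVec a u ≠ 0) :
    (∀ a ∈ S, ∀ a' ∈ S,
      (Gpre U B H κ u a ≤ Gpre U B H κ u a' ↔ Rpre U B H κ u a ≤ Rpre U B H κ u a')) ∧
    (∀ a ∈ S,
      ((∀ a' ∈ S, Gpre U B H κ u a ≤ Gpre U B H κ u a')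
        ↔ (∀ a' ∈ S, Rpre U B H κ u a ≤ Rpre U B H κ u a'))) := by
  have main : ∀ a ∈ S, ∀ a' ∈ S,
      (Gpre U B H κ u a ≤ Gpre U B H κ u a' ↔ Rpre U B H κ u a ≤ Rpre U B H κ u a') := by
    intro a ha a' ha'
    set D := (∑ i, ‖H.mulVec a i‖ ^ 2) + κ * ∑ j, ‖a j‖ ^ 2 with hDdef
    set D' := (∑ i, ‖H.mulVec a' i‖ ^ 2) + κ * ∑ j, ‖a' j‖ ^ 2 with hD'def
    set Q := ‖H.mulVec a u‖ ^ 2 with hQdef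
    set Q' := ‖H.mulVec a' u‖ ^ 2 with hQ'def
    have hQ : 0 < Q := pow_pos (norm_pos_iff.mpr (hSh a ha)) 2
    have hQ' : 0 < Q' := pow_pos (norm_pos_iff.mpr (hSh a' ha')) 2
    have hDQ : Q ≤ D := by
      have h1 : Q ≤ ∑ i, ‖H.mulVec a i‖ ^ 2 :=
        Finset.single_le_sum (f := fun i => ‖H.mulVec a i‖ ^ 2)
          (fun i _ => by positivity) (Finset.mem_univ u)
      have hs : (0:ℝ) ≤ ∑ j, ‖a j‖ ^ 2 := Finset.sum_nonneg fun j _ => by positivity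
      nlinarith
    have hDQ' : Q' ≤ D' := by
      have h1 : Q' ≤ ∑ i, ‖H.mulVec a' i‖ ^ 2 :=
        Finset.single_le_sum (f := fun i => ‖H.mulVec a' i‖ ^ 2)
          (fun i _ => by positivity) (Finset.mem_univ u)
      have hs : (0:ℝ) ≤ ∑ j, ‖a' j‖ ^ 2 := Finset.sum_nonneg fun j _ => by positivity
      nlinarith
    have hD : 0 < D := lt_of_lt_of_le hQ hDQ
    have hD' : 0 < D' := lt_of_lt_of_le hQ' hDQ'
    rw [Gpre_eq U B H κ hκ u a (hS0 a ha), Gpre_eq U B H κ hκ u a' (hS0 a' ha')]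
    have hG : (1 - Q / D ≤ 1 - Q' / D') ↔ Q' / D' ≤ Q / D := by constructor <;> intro h <;> linarith
    rw [hG, Rpre, Rpre, ← hDdef, ← hD'def, ← hQdef, ← hQ'def,
      div_le_div_iff₀ hD' hD, div_le_div_iff₀ hQ hQ']
    constructor <;> intro h <;> nlinarith
  refine ⟨main, fun a ha => ?_⟩
  constructor
  · intro h a' ha'
    exact (main a ha a' ha').mp (h a' ha')
  · intro h a' ha'
    exact (main a ha a' ha').mpr (h a' ha')
end

section
/- (Optimal value after substituting the optimal per-antenna scaling, part of Lemma 2.) Let H ∈ ℂ^{U×B}, κ > 0, b ∈ {1,…,B}, h_b the b-th column of H, and z ∈ ℂ^U nonzero. With ζ_b(z) = (h_b^H z)/(‖H^H z‖₂² + κ ‖z‖₂²), one has ‖e_b^H − ζ_b(z) z^H H‖₂² + κ |ζ_b(z)|² ‖z‖₂² = 1 − |h_b^H z|² / ( ‖H^H z‖₂² + κ ‖z‖₂² ). -/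
open Matrix

/-- The per-row Wiener-filter objective evaluated at the structured row `ζ zᴴ`:
`G(ζ) = ‖e_bᴴ − ζ zᴴ H‖₂² + κ |ζ|² ‖z‖₂²`, where `zᴴ H` is `vecMul (star z) H`. -/
noncomputable def postObj (U B : ℕ) (H : Matrix (Fin U) (Fin B) ℂ) (κ : ℝ)
    (b : Fin B) (z : Fin U → ℂ) (ζ : ℂ) : ℝ :=
  (∑ j, ‖(Pi.single b 1 : Fin B → ℂ) j - ζ * Matrix.vecMul (star z) H j‖ ^ 2)
    + κ * ‖ζ‖ ^ 2 * ∑ i, ‖z i‖ ^ 2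

/-- The optimal per-antenna scaling factor `ζ_b(z) = (h_bᴴ z)/(‖Hᴴ z‖₂² + κ ‖z‖₂²)`. -/
noncomputable def zetaOpt (U B : ℕ) (H : Matrix (Fin U) (Fin B) ℂ) (κ : ℝ)
    (b : Fin B) (z : Fin U → ℂ) : ℂ :=
  Hᴴ.mulVec z b / ((((∑ j, ‖Hᴴ.mulVec z j‖ ^ 2) + κ * ∑ i, ‖z i‖ ^ 2 : ℝ)) : ℂ)

/-- optimal value after substituting the optimal per-antenna scaling,
part of Lemma 2: for `κ > 0` and nonzero `z`,
`‖e_bᴴ − ζ_b(z) zᴴ H‖₂² + κ |ζ_b(z)|² ‖z‖₂² = 1 − |h_bᴴ z|² / (‖Hᴴ z‖₂² + κ ‖z‖₂²)`. -/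
theorem postFAWP_optimal_value (U B : ℕ) (H : Matrix (Fin U) (Fin B) ℂ)
    (κ : ℝ) (hκ : 0 < κ) (b : Fin B) (z : Fin U → ℂ) (hz : z ≠ 0) :
    postObj U B H κ b z (zetaOpt U B H κ b z)
      = 1 - ‖Hᴴ.mulVec z b‖ ^ 2 / ((∑ j, ‖Hᴴ.mulVec z j‖ ^ 2) + κ * ∑ i, ‖z i‖ ^ 2) := by
  classical
  set w : Fin B → ℂ := Hᴴ.mulVec z with hw
  have hvec : ∀ j, Matrix.vecMul (star z) H j = starRingEnd ℂ (w j) := by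
    intro j
    simp [hw, Matrix.vecMul, Matrix.mulVec, dotProduct, Matrix.conjTranspose_apply,
      map_sum, mul_comm]
  set S : ℝ := ∑ j, ‖w j‖ ^ 2 with hS
  set Z : ℝ := ∑ i, ‖z i‖ ^ 2 with hZ
  have hZpos : 0 < Z := by
    obtain ⟨i, hi⟩ := Function.ne_iff.mp hz
    refine Finset.sum_pos' (fun j _ => by positivity) ⟨i, Finset.mem_univ i, pow_pos (norm_pos_iff.mpr hi) 2⟩
  have hSnn : 0 ≤ S := Finset.sum_nonneg fun j _ => by positivity
  have hD : (0:ℝ) < S + κ * Z := by positivity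
  have hDne : (S + κ * Z : ℝ) ≠ 0 := ne_of_gt hD
  have hDneC : ((S + κ * Z : ℝ) : ℂ) ≠ 0 := by exact_mod_cast hDne
  set c : ℂ := w b with hc
  have hzeta : zetaOpt U B H κ b z = c / ((S + κ * Z : ℝ) : ℂ) := rfl
  set ζ : ℂ := c / ((S + κ * Z : ℝ) : ℂ) with hζ
  -- norms to normSq
  have hns : ∀ a : ℂ, ‖a‖ ^ 2 = Complex.normSq a := fun a => by
    rw [Complex.sq_norm]
  -- expand each summand
  have key : ∀ j, ‖(Pi.single b 1 : Fin B → ℂ) j - ζ * Matrix.vecMul (star z) H j‖ ^ 2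
      = Complex.normSq ((Pi.single b 1 : Fin B → ℂ) j)
        + Complex.normSq ζ * Complex.normSq (w j)
        - 2 * ((Pi.single b 1 : Fin B → ℂ) j * (starRingEnd ℂ ζ * w j)).re := by
    intro j
    rw [hns, hvec j, Complex.normSq_sub, Complex.normSq_mul, Complex.normSq_conj,
      _root_.map_mul, Complex.conj_conj]
  have hsum1 : ∑ j, Complex.normSq ((Pi.single b 1 : Fin B → ℂ) j) = 1 := by
    rw [Finset.sum_eq_single b]
    · simp
    · intro j _ hj; simp [Pi.single_apply, hj]
    · simp
  have hsum3 : ∑ j, ((Pi.single b 1 : Fin B → ℂ) j * (starRingEnd ℂ ζ * w j)).re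
      = (starRingEnd ℂ ζ * c).re := by
    rw [← Complex.re_sum]
    congr 1
    rw [Finset.sum_eq_single b]
    · simp [hc]
    · intro j _ hj; simp [Pi.single_apply, hj]
    · simp
  have hnsζ : Complex.normSq ζ = Complex.normSq c / (S + κ * Z) ^ 2 := by
    rw [hζ, Complex.normSq_div, Complex.normSq_ofReal, sq]
  have hre : (starRingEnd ℂ ζ * c).re = Complex.normSq c / (S + κ * Z) := by
    rw [hζ, map_div₀, Complex.conj_ofReal, div_mul_eq_mul_div,
      mul_comm ((starRingEnd ℂ) c) c, Complex.mul_conj, ← Complex.ofReal_div,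
      Complex.ofReal_re]
  rw [postObj, hzeta]
  simp only [← hζ, key, Finset.sum_add_distrib, Finset.sum_sub_distrib,
    ← Finset.sum_mul, ← Finset.mul_sum, hsum1, hsum3, ← hS, ← hZ, hns, ← hc]
  rw [hnsζ, hre,
    show (∑ i, Complex.normSq (w i)) = S from
      (Finset.sum_congr rfl fun j _ => (hns (w j)).symm).trans hS.symm,
    show (∑ x, Complex.normSq (z x)) = Z from
      (Finset.sum_congr rfl fun i _ => (hns (z i)).symm).trans hZ.symm]
  field_simp
  ring
end

section
/- (Lemma 2, equivalence of the finite-alphabet problems.) Let H ∈ ℂ^{U×B}, κ > 0, b ∈ {1,…,B}, h_b the b-th column of H, and let S ⊆ ℂ^U be any set of nonzero vectors such that h_b^H z ≠ 0 for all z ∈ S. Define G(z) = min over ζ ∈ ℂ of ( ‖e_b^H − ζ z^H H‖₂² + κ |ζ|² ‖z‖₂² ) and R(z) = ( ‖H^H z‖₂² + κ ‖z‖₂² ) / |h_b^H z|². Then for all z, z' ∈ S, G(z) ≤ G(z') if and only if R(z) ≤ R(z'); consequently, z ∈ S minimizes G over S if and only if z minimizes R over S. -/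
open Matrix

/-- `G(z)`: the minimum over `ζ ∈ ℂ` of the structured per-row objective. -/
noncomputable def Gpost (U B : ℕ) (H : Matrix (Fin U) (Fin B) ℂ) (κ : ℝ)
    (b : Fin B) (z : Fin U → ℂ) : ℝ :=
  sInf (Set.range (postObj U B H κ b z))

/-- The ratio objective `R(z) = (‖Hᴴ z‖₂² + κ ‖z‖₂²) / |h_bᴴ z|²` of eq. (16). -/
noncomputable def Rpost (U B : ℕ) (H : Matrix (Fin U) (Fin B) ℂ) (κ : ℝ)
    (b : Fin B) (z : Fin U → ℂ) : ℝ :=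
  ((∑ j, ‖Hᴴ.mulVec z j‖ ^ 2) + κ * ∑ i, ‖z i‖ ^ 2) / ‖Hᴴ.mulVec z b‖ ^ 2

/-- Explicit quadratic form of the structured per-row objective. -/
lemma postObj_eq (U B : ℕ) (H : Matrix (Fin U) (Fin B) ℂ) (κ : ℝ)
    (b : Fin B) (z : Fin U → ℂ) (ζ : ℂ) :
    postObj U B H κ b z ζ =
      1 - 2 * (ζ * star (Hᴴ.mulVec z b)).re
        + ‖ζ‖ ^ 2 * ((∑ j, ‖Hᴴ.mulVec z j‖ ^ 2) + κ * ∑ i, ‖z i‖ ^ 2) := by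
  have ha : ∀ j, Matrix.vecMul (star z) H j = star (Hᴴ.mulVec z j) := by
    intro j
    simp [Matrix.vecMul, Matrix.mulVec, dotProduct, Matrix.conjTranspose_apply, mul_comm]
  have hsq : ∀ w : ℂ, ‖w‖^2 = Complex.normSq w := by
    intro w; exact Complex.sq_norm w
  unfold postObj
  have hterm : ∀ j, ‖(Pi.single b 1 : Fin B → ℂ) j - ζ * Matrix.vecMul (star z) H j‖ ^ 2
      = Complex.normSq ((Pi.single b 1 : Fin B → ℂ) j)
        + Complex.normSq ζ * Complex.normSq (Hᴴ.mulVec z j)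
        - 2 * ((Pi.single b 1 : Fin B → ℂ) j * (starRingEnd ℂ) (ζ * star (Hᴴ.mulVec z j))).re := by
    intro j
    rw [hsq, ha j, Complex.normSq_sub, Complex.normSq_mul, ← starRingEnd_apply,
      Complex.normSq_conj]
  rw [Finset.sum_congr rfl (fun j _ => hterm j)]
  have h1 : ∑ j, Complex.normSq ((Pi.single b 1 : Fin B → ℂ) j) = 1 := by
    rw [Finset.sum_eq_single b]
    · simp
    · intro j _ hj; simp [Pi.single_eq_of_ne hj]
    · simp
  have h2 : ∑ j, 2 * ((Pi.single b 1 : Fin B → ℂ) j * (starRingEnd ℂ) (ζ * star (Hᴴ.mulVec z j))).re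
      = 2 * ((starRingEnd ℂ) (ζ * star (Hᴴ.mulVec z b))).re := by
    rw [Finset.sum_eq_single b]
    · simp
    · intro j _ hj; simp [Pi.single_eq_of_ne hj]
    · simp
  rw [Finset.sum_sub_distrib, Finset.sum_add_distrib, h1, h2, ← Finset.mul_sum]
  rw [Complex.conj_re]
  have h3 : ∑ j, Complex.normSq (Hᴴ.mulVec z j) = ∑ j, ‖Hᴴ.mulVec z j‖ ^ 2 :=
    Finset.sum_congr rfl (fun j _ => (hsq _).symm)
  rw [h3, hsq ζ]
  ring

/-- Minimum of the scalar quadratic `ζ ↦ 1 - 2 Re(ζ c̄) + |ζ|² A`. -/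
lemma quad_min (A : ℝ) (hA : 0 < A) (c : ℂ) :
    (∀ ζ : ℂ, 1 - ‖c‖ ^ 2 / A ≤ 1 - 2 * (ζ * star c).re + ‖ζ‖ ^ 2 * A) ∧
    (1 - 2 * ((c / (A : ℂ)) * star c).re + ‖c / (A : ℂ)‖ ^ 2 * A = 1 - ‖c‖ ^ 2 / A) := by
  have hsq : ∀ w : ℂ, ‖w‖^2 = Complex.normSq w := by
    intro w; exact Complex.sq_norm w
  have hA0 : (A : ℝ) ≠ 0 := hA.ne'
  constructor
  · intro ζ
    have key : ‖ζ‖ ^ 2 * A - 2 * (ζ * star c).re + ‖c‖ ^ 2 / A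
        = A * Complex.normSq (ζ - c / (A : ℂ)) := by
      rw [Complex.normSq_sub]
      have e1 : Complex.normSq (c / (A : ℂ)) = ‖c‖ ^ 2 / A ^ 2 := by
        rw [Complex.normSq_div, hsq, Complex.normSq_ofReal]; ring
      have e2 : (ζ * (starRingEnd ℂ) (c / (A : ℂ))).re = (ζ * star c).re / A := by
        rw [map_div₀, Complex.conj_ofReal, ← mul_div_assoc, Complex.div_ofReal_re,
          starRingEnd_apply]
      rw [e1, e2, hsq]
      field_simp
      ring
    have hnn : 0 ≤ A * Complex.normSq (ζ - c / (A : ℂ)) :=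
      mul_nonneg hA.le (Complex.normSq_nonneg _)
    nlinarith [hnn, key]
  · have e2 : ((c / (A : ℂ)) * star c).re = ‖c‖ ^ 2 / A := by
      rw [div_mul_eq_mul_div, ← starRingEnd_apply, Complex.mul_conj, Complex.div_ofReal_re,
        Complex.ofReal_re, hsq]
    have e1 : ‖c / (A : ℂ)‖ ^ 2 = ‖c‖ ^ 2 / A ^ 2 := by
      rw [norm_div, div_pow, Complex.norm_real, Real.norm_eq_abs, sq_abs]
    rw [e1, e2]
    field_simp
    ring

/-- Closed form of `G(z)` for nonzero `z`. -/
lemma Gpost_eq (U B : ℕ) (H : Matrix (Fin U) (Fin B) ℂ) (κ : ℝ) (hκ : 0 < κ)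
    (b : Fin B) (z : Fin U → ℂ) (hz : z ≠ 0) :
    Gpost U B H κ b z =
      1 - ‖Hᴴ.mulVec z b‖ ^ 2
          / ((∑ j, ‖Hᴴ.mulVec z j‖ ^ 2) + κ * ∑ i, ‖z i‖ ^ 2) := by
  have hzsum : 0 < ∑ i, ‖z i‖ ^ 2 := by
    obtain ⟨i, hi⟩ : ∃ i, z i ≠ 0 := by
      by_contra h; push_neg at h; exact hz (funext h)
    exact Finset.sum_pos' (fun i _ => sq_nonneg _)
      ⟨i, Finset.mem_univ i, pow_pos (norm_pos_iff.mpr hi) 2⟩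
  have hA : 0 < (∑ j, ‖Hᴴ.mulVec z j‖ ^ 2) + κ * ∑ i, ‖z i‖ ^ 2 := by
    have h1 : 0 ≤ ∑ j, ‖Hᴴ.mulVec z j‖ ^ 2 :=
      Finset.sum_nonneg (fun j _ => sq_nonneg _)
    nlinarith
  obtain ⟨hlb0, hval0⟩ := quad_min _ hA (Hᴴ.mulVec z b)
  have hlb : ∀ ζ : ℂ,
      1 - ‖Hᴴ.mulVec z b‖ ^ 2 / ((∑ j, ‖Hᴴ.mulVec z j‖ ^ 2) + κ * ∑ i, ‖z i‖ ^ 2)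
        ≤ postObj U B H κ b z ζ := by
    intro ζ; rw [postObj_eq]; exact hlb0 ζ
  have hval : postObj U B H κ b z
        (Hᴴ.mulVec z b / (((∑ j, ‖Hᴴ.mulVec z j‖ ^ 2) + κ * ∑ i, ‖z i‖ ^ 2 : ℝ) : ℂ))
      = 1 - ‖Hᴴ.mulVec z b‖ ^ 2 / ((∑ j, ‖Hᴴ.mulVec z j‖ ^ 2) + κ * ∑ i, ‖z i‖ ^ 2) := by
    rw [postObj_eq]; exact hval0
  unfold Gpost
  apply le_antisymm
  · calc sInf (Set.range (postObj U B H κ b z))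
        ≤ postObj U B H κ b z
            (Hᴴ.mulVec z b / (((∑ j, ‖Hᴴ.mulVec z j‖ ^ 2) + κ * ∑ i, ‖z i‖ ^ 2 : ℝ) : ℂ)) :=
          csInf_le ⟨_, by rintro x ⟨ζ, rfl⟩; exact hlb ζ⟩ ⟨_, rfl⟩
      _ = _ := hval
  · exact le_csInf ⟨postObj U B H κ b z 0, ⟨0, rfl⟩⟩ (by rintro x ⟨ζ, rfl⟩; exact hlb ζ)

private lemma ratio_iff {a a' p p' : ℝ} (ha : 0 < a) (ha' : 0 < a')
    (hp : 0 < p) (hp' : 0 < p') :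
    (1 - p / a ≤ 1 - p' / a') ↔ (a / p ≤ a' / p') := by
  rw [sub_le_sub_iff_left, div_le_div_iff₀ ha' ha, div_le_div_iff₀ hp hp']
  constructor <;> intro h <;> nlinarith

/-- Lemma 2, equivalence of the finite-alphabet problems: on any set `S`
of nonzero vectors with `h_bᴴ z ≠ 0`, `G(z) ≤ G(z') ↔ R(z) ≤ R(z')`; consequently
`z` minimizes `G` over `S` iff it minimizes `R` over `S`. -/
theorem postFAWP_lemma2_equivalence (U B : ℕ) (H : Matrix (Fin U) (Fin B) ℂ)
    (κ : ℝ) (hκ : 0 < κ) (b : Fin B) (S : Set (Fin U → ℂ))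
    (hS0 : ∀ z ∈ S, z ≠ 0) (hSh : ∀ z ∈ S, Hᴴ.mulVec z b ≠ 0) :
    (∀ z ∈ S, ∀ z' ∈ S,
      (Gpost U B H κ b z ≤ Gpost U B H κ b z' ↔ Rpost U B H κ b z ≤ Rpost U B H κ b z')) ∧
    (∀ z ∈ S,
      ((∀ z' ∈ S, Gpost U B H κ b z ≤ Gpost U B H κ b z')
        ↔ (∀ z' ∈ S, Rpost U B H κ b z ≤ Rpost U B H κ b z'))) := by
  have hApos : ∀ w ∈ S, 0 < (∑ j, ‖Hᴴ.mulVec w j‖ ^ 2) + κ * ∑ i, ‖w i‖ ^ 2 := by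
    intro w hw
    have h1 : 0 ≤ ∑ j, ‖Hᴴ.mulVec w j‖ ^ 2 :=
      Finset.sum_nonneg (fun j _ => sq_nonneg _)
    have h2 : 0 < ∑ i, ‖w i‖ ^ 2 := by
      obtain ⟨i, hi⟩ : ∃ i, w i ≠ 0 := by
        by_contra h; push_neg at h; exact hS0 w hw (funext h)
      exact Finset.sum_pos' (fun i _ => sq_nonneg _)
        ⟨i, Finset.mem_univ i, pow_pos (norm_pos_iff.mpr hi) 2⟩
    nlinarith
  have hcpos : ∀ w ∈ S, 0 < ‖Hᴴ.mulVec w b‖ ^ 2 := by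
    intro w hw
    exact pow_pos (norm_pos_iff.mpr (hSh w hw)) 2
  have key : ∀ z ∈ S, ∀ z' ∈ S,
      (Gpost U B H κ b z ≤ Gpost U B H κ b z' ↔ Rpost U B H κ b z ≤ Rpost U B H κ b z') := by
    intro z hz z' hz'
    rw [Gpost_eq U B H κ hκ b z (hS0 z hz), Gpost_eq U B H κ hκ b z' (hS0 z' hz')]
    unfold Rpost
    exact ratio_iff (hApos z hz) (hApos z' hz') (hcpos z hz) (hcpos z' hz')
  refine ⟨key, fun z hz => ?_⟩
  constructor
  · intro h z' hz'; exact (key z hz z' hz').mp (h z' hz')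
  · intro h z' hz'; exact (key z hz z' hz').mpr (h z' hz')
end
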